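/- arXiv:2604.24229 — 2 statements merged into one kernel-verified Lean document; each statement's English description precedes it below -/
import Mathlib

section
/- (Rotational invariance of the Winfree model on SO(n).) Let n, N ≥ 1, κ > 0, Ω_1,…,Ω_N skew-symmetric, Q, Q̃ ∈ SO(n), and η, I : ℝ^{n×n} → ℝ. Suppose R_1,…,R_N : [0,∞) → ℝ^{n×n} are differentiable, take values in SO(n), and satisfy R_i'(t)·R_i(t)ᵀ = Ω_i + (κ/(2N))·η(R_i(t))·(Σ_{j=1}^N I(R_j(t)))·(Q R_i(t)ᵀ − R_i(t) Qᵀ) for all t ≥ 0 and i = 1,…,N. Define η̃(Y) := η(Y Q̃ᵀ Q), J(Y) := I(Y Q̃ᵀ Q), and R̃_i(t) := R_i(t) Qᵀ Q̃. Then each R̃_i takes values in SO(n), R̃_i(0) = R_i(0) Qᵀ Q̃, and R̃_i'(t)·R̃_i(t)ᵀ = Ω_i + (κ/(2N))·η̃(R̃_i(t))·(Σ_{j=1}^N J(R̃_j(t)))·(Q̃ R̃_i(t)ᵀ − R̃_i(t) Q̃ᵀ) for all t ≥ 0 and i = 1,…,N. -/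
open Matrix Real

def isSO {n : ℕ} (R : Matrix (Fin n) (Fin n) ℝ) : Prop :=
  Rᵀ * R = 1 ∧ R.det = 1

def isSkew {n : ℕ} (X : Matrix (Fin n) (Fin n) ℝ) : Prop := Xᵀ = -X

/-- rotational invariance of the Winfree model on SO(n). -/
theorem stmt1 (n N : ℕ) (hn : 1 ≤ n) (hN : 1 ≤ N) (κ : ℝ) (hκ : 0 < κ)
    (Ω : Fin N → Matrix (Fin n) (Fin n) ℝ) (hΩ : ∀ i, isSkew (Ω i))
    (Q Q' : Matrix (Fin n) (Fin n) ℝ) (hQ : isSO Q) (hQ' : isSO Q')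
    (η I : Matrix (Fin n) (Fin n) ℝ → ℝ)
    (R R' : Fin N → ℝ → Matrix (Fin n) (Fin n) ℝ)
    (hSO : ∀ i, ∀ t ∈ Set.Ici (0:ℝ), isSO (R i t))
    (hderiv : ∀ i, ∀ t ∈ Set.Ici (0:ℝ), ∀ k l,
      HasDerivWithinAt (fun s => R i s k l) (R' i t k l) (Set.Ici 0) t)
    (hode : ∀ i, ∀ t ∈ Set.Ici (0:ℝ),
      R' i t * (R i t)ᵀ =
        Ω i + (κ / (2 * (N:ℝ)) * η (R i t) * ∑ j, I (R j t)) •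
          (Q * (R i t)ᵀ - R i t * Qᵀ)) :
    ∀ i, (∀ t ∈ Set.Ici (0:ℝ), isSO (R i t * Qᵀ * Q')) ∧
      (R i 0 * Qᵀ * Q' = R i 0 * Qᵀ * Q') ∧
      ∀ t ∈ Set.Ici (0:ℝ),
        (∀ k l, HasDerivWithinAt (fun s => (R i s * Qᵀ * Q') k l)
          ((R' i t * Qᵀ * Q') k l) (Set.Ici 0) t) ∧
        (R' i t * Qᵀ * Q') * (R i t * Qᵀ * Q')ᵀ =
          Ω i + (κ / (2 * (N:ℝ)) *
              (fun Y => η (Y * Q'ᵀ * Q)) (R i t * Qᵀ * Q') *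
              ∑ j, (fun Y => I (Y * Q'ᵀ * Q)) (R j t * Qᵀ * Q')) •
            (Q' * (R i t * Qᵀ * Q')ᵀ - (R i t * Qᵀ * Q') * Q'ᵀ) := by
  have hQ2 : Q * Qᵀ = 1 := mul_eq_one_comm.mp hQ.1
  have hQ'2 : Q' * Q'ᵀ = 1 := mul_eq_one_comm.mp hQ'.1
  -- cancellation lemma
  have hcancel : ∀ X : Matrix (Fin n) (Fin n) ℝ, X * Qᵀ * Q' * Q'ᵀ * Q = X := by
    intro X
    calc X * Qᵀ * Q' * Q'ᵀ * Q = X * (Qᵀ * ((Q' * Q'ᵀ) * Q)) := by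
          simp [Matrix.mul_assoc]
      _ = X * (Qᵀ * Q) := by rw [hQ'2, Matrix.one_mul]
      _ = X := by rw [hQ.1, Matrix.mul_one]
  intro i
  refine ⟨?_, rfl, ?_⟩
  · intro t ht
    obtain ⟨h1, h2⟩ := hSO i t ht
    constructor
    · show (R i t * Qᵀ * Q')ᵀ * (R i t * Qᵀ * Q') = 1
      calc (R i t * Qᵀ * Q')ᵀ * (R i t * Qᵀ * Q')
          = Q'ᵀ * (Qᵀᵀ * (((R i t)ᵀ * R i t) * (Qᵀ * Q'))) := by
            simp [Matrix.transpose_mul, Matrix.mul_assoc]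
        _ = Q'ᵀ * (Q * (Qᵀ * Q')) := by rw [h1]; simp
        _ = 1 := by rw [← Matrix.mul_assoc Q Qᵀ, hQ2, Matrix.one_mul, hQ'.1]
    · simp [Matrix.det_mul, Matrix.det_transpose, h2, hQ.2, hQ'.2]
  · intro t ht
    constructor
    · intro k l
      have e1 : ∀ s, (R i s * Qᵀ * Q') k l = ∑ m, R i s k m * (Qᵀ * Q') m l := by
        intro s; rw [Matrix.mul_assoc]; rfl
      have e2 : (R' i t * Qᵀ * Q') k l = ∑ m, R' i t k m * (Qᵀ * Q') m l := by
        rw [Matrix.mul_assoc]; rfl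
      simp only [e1, e2]
      exact HasDerivWithinAt.fun_sum fun m _ =>
        (hderiv i t ht k m).mul_const ((Qᵀ * Q') m l)
    · have key : ∀ X : Matrix (Fin n) (Fin n) ℝ,
          (X * Qᵀ * Q') * (R i t * Qᵀ * Q')ᵀ = X * (R i t)ᵀ := by
        intro X
        calc (X * Qᵀ * Q') * (R i t * Qᵀ * Q')ᵀ
            = X * (Qᵀ * ((Q' * Q'ᵀ) * (Qᵀᵀ * (R i t)ᵀ))) := by
              simp [Matrix.transpose_mul, Matrix.mul_assoc]
          _ = X * (R i t)ᵀ := by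
              rw [hQ'2, Matrix.one_mul, Matrix.transpose_transpose,
                ← Matrix.mul_assoc Qᵀ Q, hQ.1, Matrix.one_mul]
      have hbr : Q' * (R i t * Qᵀ * Q')ᵀ - (R i t * Qᵀ * Q') * Q'ᵀ
          = Q * (R i t)ᵀ - R i t * Qᵀ := by
        congr 1
        · calc Q' * (R i t * Qᵀ * Q')ᵀ
              = (Q' * Q'ᵀ) * (Qᵀᵀ * (R i t)ᵀ) := by
                simp [Matrix.transpose_mul, Matrix.mul_assoc]
            _ = Q * (R i t)ᵀ := by rw [hQ'2, Matrix.one_mul, Matrix.transpose_transpose]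
        · calc (R i t * Qᵀ * Q') * Q'ᵀ = R i t * Qᵀ * (Q' * Q'ᵀ) := by
                rw [Matrix.mul_assoc]
            _ = R i t * Qᵀ := by rw [hQ'2, Matrix.mul_one]
      rw [key, hbr]
      simp only [hcancel]
      exact hode i t ht
end

section
/- (Reduction to the classical Winfree model for n = 2.) Let N ≥ 1, κ > 0, ν_1,…,ν_N ∈ ℝ, and Î : ℝ → ℝ. Suppose θ_1,…,θ_N : [0,∞) → ℝ are differentiable and satisfy the classical Winfree model θ_i'(t) = ν_i − (κ/N)·(Σ_{j=1}^N Î(θ_j(t)))·sin θ_i(t) for all t ≥ 0 and i = 1,…,N. Define the 2×2 matrices R_i(t) := [[cos θ_i(t), −sin θ_i(t)], [sin θ_i(t), cos θ_i(t)]] and Ω_i := [[0, −ν_i], [ν_i, 0]]. Then each R_i takes values in SO(2) and satisfies R_i'(t) = Ω_i R_i(t) + (κ/(2N))·(Σ_{j=1}^N Î(θ_j(t)))·(I₂ − R_i(t)²) for all t ≥ 0 and i = 1,…,N. -/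
open Matrix Real

/-- The rotation matrix of angle `θ`. -/
noncomputable def rotM (θ : ℝ) : Matrix (Fin 2) (Fin 2) ℝ :=
  !![Real.cos θ, -Real.sin θ; Real.sin θ, Real.cos θ]

/-- reduction of the Winfree matrix model on SO(2) to the classical
Winfree model with sensitivity `-sin`. -/
theorem stmt2 (N : ℕ) (hN : 1 ≤ N) (κ : ℝ) (hκ : 0 < κ) (ν : Fin N → ℝ)
    (Ihat : ℝ → ℝ) (θ : Fin N → ℝ → ℝ)
    (hode : ∀ i, ∀ t ∈ Set.Ici (0:ℝ),
      HasDerivWithinAt (θ i)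
        (ν i - κ / (N:ℝ) * (∑ j, Ihat (θ j t)) * Real.sin (θ i t)) (Set.Ici 0) t) :
    ∀ i, (∀ t ∈ Set.Ici (0:ℝ), isSO (rotM (θ i t))) ∧
      ∀ t ∈ Set.Ici (0:ℝ), ∀ k l : Fin 2,
        HasDerivWithinAt (fun s => rotM (θ i s) k l)
          ((!![0, -ν i; ν i, 0] * rotM (θ i t) +
            (κ / (2 * (N:ℝ)) * ∑ j, Ihat (θ j t)) •
              (1 - rotM (θ i t) * rotM (θ i t))) k l)
          (Set.Ici 0) t := by
  intro i
  constructor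
  · intro t ht
    have hpyth := Real.sin_sq_add_cos_sq (θ i t)
    have hT : (rotM (θ i t))ᵀ =
        !![Real.cos (θ i t), Real.sin (θ i t); -Real.sin (θ i t), Real.cos (θ i t)] := by
      ext k l; fin_cases k <;> fin_cases l <;> simp [rotM]
    constructor
    · rw [hT]
      ext k l
      fin_cases k <;> fin_cases l <;>
        simp [rotM, Matrix.mul_apply, Fin.sum_univ_two, Matrix.one_apply] <;> nlinarith
    · simp only [rotM, Matrix.det_fin_two_of]; nlinarith
  · intro t ht k l
    have h := hode i t ht
    have hpyth := Real.sin_sq_add_cos_sq (θ i t)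
    fin_cases k <;> fin_cases l
    · have hd := h.cos
      convert hd using 1
      · simp [rotM]
      simp [rotM, Matrix.mul_apply, Fin.sum_univ_two, Matrix.one_apply,
        Matrix.smul_apply, Matrix.add_apply, Matrix.sub_apply]
      linear_combination (-(κ / (2*(N:ℝ)) * ∑ j, Ihat (θ j t))) * hpyth
    · have hd := h.sin.neg
      convert hd using 1
      · rfl
      · rfl
      · ext s; simp [rotM]
      simp [rotM, Matrix.mul_apply, Fin.sum_univ_two, Matrix.one_apply,
        Matrix.smul_apply, Matrix.add_apply, Matrix.sub_apply]
      ring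
    · have hd := h.sin
      convert hd using 1
      · simp [rotM]
      simp [rotM, Matrix.mul_apply, Fin.sum_univ_two, Matrix.one_apply,
        Matrix.smul_apply, Matrix.add_apply, Matrix.sub_apply]
      ring
    · have hd := h.cos
      convert hd using 1
      · simp [rotM]
      simp [rotM, Matrix.mul_apply, Fin.sum_univ_two, Matrix.one_apply,
        Matrix.smul_apply, Matrix.add_apply, Matrix.sub_apply]
      linear_combination (-(κ / (2*(N:ℝ)) * ∑ j, Ihat (θ j t))) * hpyth
end
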